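/- Define the operator ℒ̄ on the Banach space B([0,T]×𝒳) of bounded Borel measurable functions with the sup norm by (ℒ̄ψ)(t,x) = e^{βt} ∫_t^T sup_{π∈Π} { R(s,x) + Σ_{S∈𝒜(x)} ( Σ_{y∈𝒳} e^{−βs} ψ(s,y) q(y|s,x,S) ) π(S|s,x) } ds, where β = 2λ+1 and R(s,x) = Σ_{S∈𝒜(x)} r(S) π(S|s,x) + γ ℋ(π(·|s,x)). Then ℒ̄ is a contraction on B([0,T]×𝒳), and the exploratory HJB equation ∂v/∂t(t,x) + sup_{π∈Π} Σ_{S∈𝒜(x)} [ H(t,x,S,v(·,·)) − γ log π(S|t,x) ] π(S|t,x) = 0 on [0,T)×𝒳 with v(T,x) = 0 admits a solution in C^{1,0}([0,T]×𝒳). -/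

import Mathlib

open MeasureTheory intervalIntegral

namespace RLNRM

/-- Primitives of the choice-based network revenue management model:
`m` resources with initial inventory `c`, `n` products with prices `p`,
consumption matrix `A`, Poisson arrival rate `lam` on the horizon `[0,T]`,
MNL-type choice probabilities `P j S` (buy `j` when offered `S`) and `P0 S`
(no purchase), and entropy temperature `gamma`. -/
structure NRM (m n : ℕ) where
  c : Fin m → ℕ
  A : Fin m → Fin n → ℕ
  p : Fin n → ℝ
  lam : ℝ
  lam_pos : 0 < lam
  T : ℝ
  T_pos : 0 < T
  gamma : ℝ
  gamma_nonneg : 0 ≤ gamma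
  P : Finset (Fin n) → Fin n → ℝ
  P0 : Finset (Fin n) → ℝ
  P_nonneg : ∀ S j, 0 ≤ P S j
  P0_nonneg : ∀ S, 0 ≤ P0 S
  P_sum_one : ∀ S, P0 S + ∑ j ∈ S, P S j = 1
  P_not_mem : ∀ S j, j ∉ S → P S j = 0

variable {m n : ℕ}

/-- The `j`-th column of the consumption matrix, as an integer vector. -/
def NRM.col (M : NRM m n) (j : Fin n) : Fin m → ℤ := fun i => (M.A i j : ℤ)

/-- The initial inventory as an integer vector. -/
def NRM.cZ (M : NRM m n) : Fin m → ℤ := fun i => (M.c i : ℤ)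

/-- The state space `𝒳 = {0,…,c 1} × ⋯ × {0,…,c m}`. -/
noncomputable def NRM.States (M : NRM m n) : Finset (Fin m → ℤ) :=
  Fintype.piFinset fun i => Finset.Icc 0 (M.c i : ℤ)

/-- The feasible assortments `𝒜(x)` at state `x`. -/
def NRM.feas (M : NRM m n) (x : Fin m → ℤ) : Finset (Finset (Fin n)) :=
  Finset.univ.filter fun S => ∀ j ∈ S, ∀ i, (M.A i j : ℤ) ≤ x i

/-- The controlled transition rates `q(y | t, x, S)`. -/
noncomputable def NRM.q (M : NRM m n) (_t : ℝ) (x : Fin m → ℤ) (S : Finset (Fin n))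
    (y : Fin m → ℤ) : ℝ :=
  if y = x then -(M.lam * (1 - M.P0 S))
  else ∑ j ∈ Finset.univ.filter (fun j : Fin n => M.col j = x - y), M.lam * M.P S j

/-- The revenue rate `r(S) = λ ∑ j, p j * P j S`. -/
noncomputable def NRM.r (M : NRM m n) (S : Finset (Fin n)) : ℝ :=
  M.lam * ∑ j, M.p j * M.P S j

/-- The Hamiltonian `H(t, x, S, v) = r S + ∑_{y ∈ 𝒳} v t y * q (y | t, x, S)`. -/
noncomputable def NRM.H (M : NRM m n) (t : ℝ) (x : Fin m → ℤ) (S : Finset (Fin n))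
    (v : ℝ → (Fin m → ℤ) → ℝ) : ℝ :=
  M.r S + ∑ y ∈ M.States, v t y * M.q t x S y

/-- An admissible randomized Markov policy. -/
structure Policy (M : NRM m n) where
  π : ℝ → (Fin m → ℤ) → Finset (Fin n) → ℝ
  measurable_t : ∀ x S, Measurable fun t => π t x S
  nonneg : ∀ t x S, 0 ≤ π t x S
  sum_one : ∀ t x, ∑ S : Finset (Fin n), π t x S = 1
  supported : ∀ t x S, S ∉ M.feas x → π t x S = 0
  continuous_t : ∀ x S, Continuous fun t => π t x S

/-- The entropy `ℋ(π(·|t,x)) = -∑_{S ∈ 𝒜(x)} π(S|t,x) log π(S|t,x)`. -/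
noncomputable def NRM.ent (M : NRM m n) (pol : Policy M) (t : ℝ) (x : Fin m → ℤ) : ℝ :=
  -∑ S ∈ M.feas x, pol.π t x S * Real.log (pol.π t x S)

/-- `v ∈ C^{1,0}([0,T] × 𝒳)`: continuously differentiable in `t` for each state `x`. -/
def NRM.C10 (M : NRM m n) (v : ℝ → (Fin m → ℤ) → ℝ) : Prop :=
  ∀ x ∈ M.States, ContDiffOn ℝ 1 (fun t => v t x) (Set.Icc 0 M.T)

/-- The time derivative `∂v/∂t (t,x)` (within the horizon `[0,T]`). -/
noncomputable def NRM.dvt (M : NRM m n) (v : ℝ → (Fin m → ℤ) → ℝ) (t : ℝ)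
    (x : Fin m → ℤ) : ℝ :=
  derivWithin (fun s => v s x) (Set.Icc 0 M.T) t

/-- Right-continuous state path built from the jump data of a trajectory:
`x0` initial state, `L` jumps at times `τ k` selling products `prd k`. -/
noncomputable def pathX (M : NRM m n) (x0 : Fin m → ℤ) (L : ℕ) (τ : ℕ → ℝ)
    (prd : ℕ → Fin n) (t : ℝ) : Fin m → ℤ :=
  x0 - ∑ k ∈ (Finset.range L).filter (fun k => τ k ≤ t), M.col (prd k)

/-- Left limit `X_{t-}` of the state path. -/
noncomputable def pathXleft (M : NRM m n) (x0 : Fin m → ℤ) (L : ℕ) (τ : ℕ → ℝ)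
    (prd : ℕ → Fin n) (t : ℝ) : Fin m → ℤ :=
  x0 - ∑ k ∈ (Finset.range L).filter (fun k => τ k < t), M.col (prd k)

/-- A probabilistic model of the controlled sales process under policy `pol`:
`law t x` is the law of the trajectory conditional on `X_t = x` (Markov family);
a trajectory is described by its `L` sale events, with jump times `τ`, sold
products `prd`, and offered assortments `act`.  The fields record that jumps lie
in `(t, T]`, are ordered, keep the state in `𝒳`, that the sold product belongs to
the offered assortment, and that sales of product `j` have intensity
`λ ∑_{S ∈ 𝒜(X_{s-})} P j S * π(S | s, X_{s-})`. -/
structure SampleModel (M : NRM m n) (pol : Policy M) (Ω : Type*)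
    [MeasurableSpace Ω] where
  law : ℝ → (Fin m → ℤ) → Measure Ω
  law_prob : ∀ t x, IsProbabilityMeasure (law t x)
  L : Ω → ℕ
  τ : Ω → ℕ → ℝ
  prd : Ω → ℕ → Fin n
  act : Ω → ℕ → Finset (Fin n)
  meas_L : Measurable L
  meas_τ : ∀ k, Measurable fun ω => τ ω k
  meas_prd : ∀ k, Measurable fun ω => prd ω k
  jumps_mem : ∀ t x, ∀ᵐ ω ∂law t x, ∀ k < L ω, t < τ ω k ∧ τ ω k ≤ M.T
  jumps_mono : ∀ t x, ∀ᵐ ω ∂law t x, ∀ k l, k < l → l < L ω → τ ω k < τ ω l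
  states_mem : ∀ t x, x ∈ M.States →
    ∀ᵐ ω ∂law t x, ∀ s : ℝ, pathX M x (L ω) (τ ω) (prd ω) s ∈ M.States
  sold_in_act : ∀ t x, ∀ᵐ ω ∂law t x, ∀ k < L ω, prd ω k ∈ act ω k
  intensity : ∀ t x, x ∈ M.States → 0 ≤ t → ∀ (j : Fin n) (u : ℝ), t ≤ u → u ≤ M.T →
    (∫ ω, ((((Finset.range (L ω)).filter fun k => τ ω k ≤ u ∧ prd ω k = j).card : ℝ))
        ∂law t x)
      = ∫ ω, (∫ s in t..u, M.lam *
          ∑ S ∈ M.feas (pathXleft M x (L ω) (τ ω) (prd ω) s),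
            M.P S j * pol.π s (pathXleft M x (L ω) (τ ω) (prd ω) s) S) ∂law t x

variable {M : NRM m n} {pol : Policy M} {Ω : Type*} [MeasurableSpace Ω]

/-- The pathwise reward-plus-entropy-bonus collected on `(t, T]` by a trajectory
started at `(t, x)`: `∫_{(t,T]} p^⊤ dN_s + γ ∫_t^T ℋ(π(·|s, X_{s-})) ds`. -/
noncomputable def SampleModel.rew (V : SampleModel M pol Ω) (t : ℝ) (x : Fin m → ℤ)
    (ω : Ω) : ℝ :=
  (∑ k ∈ Finset.range (V.L ω), if t < V.τ ω k ∧ V.τ ω k ≤ M.T then M.p (V.prd ω k) else 0)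
    + M.gamma * ∫ s in t..M.T, M.ent pol s (pathXleft M x (V.L ω) (V.τ ω) (V.prd ω) s)

/-- The entropy-regularized value function
`J(t,x;π) = E[∫_{(t,T]} p^⊤ dN_s + γ ∫_t^T ℋ(π(·|s, X_{s-})) ds | X_t = x]`. -/
noncomputable def SampleModel.J (V : SampleModel M pol Ω) (t : ℝ) (x : Fin m → ℤ) : ℝ :=
  ∫ ω, V.rew t x ω ∂V.law t x

end RLNRM

namespace RLNRM

/-- The operator `ℒ̄` on `B([0,T] × 𝒳)`:
`(ℒ̄ψ)(t,x) = e^{βt} ∫_t^T sup_{π ∈ Π} { R(s,x) + ∑_{S ∈ 𝒜(x)} (∑_{y ∈ 𝒳} e^{-βs} ψ(s,y) q(y|s,x,S)) π(S|s,x) } ds`,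
with `β = 2λ + 1` and `R(s,x) = ∑_{S ∈ 𝒜(x)} r(S) π(S|s,x) + γ ℋ(π(·|s,x))`. -/
noncomputable def NRM.Lbar {m n : ℕ} (M : NRM m n)
    (ψ : ℝ → (Fin m → ℤ) → ℝ) (t : ℝ) (x : Fin m → ℤ) : ℝ :=
  Real.exp ((2 * M.lam + 1) * t) *
    ∫ s in t..M.T,
      ⨆ pol : Policy M,
        ((∑ S ∈ M.feas x, M.r S * pol.π s x S) + M.gamma * M.ent pol s x
          + ∑ S ∈ M.feas x,
              (∑ y ∈ M.States, Real.exp (-((2 * M.lam + 1) * s)) * ψ s y * M.q s x S y)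
                * pol.π s x S)

/-! ### Auxiliary lemmas -/

section Aux

variable {m n : ℕ} (M : NRM m n)

lemma NRM.empty_mem_feas (x : Fin m → ℤ) : ∅ ∈ M.feas x := by
  simp [NRM.feas]

lemma NRM.sum_P_univ (S : Finset (Fin n)) : ∑ j, M.P S j = 1 - M.P0 S := by
  have h1 : ∑ j ∈ S, M.P S j = ∑ j, M.P S j :=
    Finset.sum_subset (Finset.subset_univ S) fun j _ hj => M.P_not_mem S j hj
  have := M.P_sum_one S
  linarith

lemma NRM.P0_le_one (S : Finset (Fin n)) : M.P0 S ≤ 1 := by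
  have h := M.P_sum_one S
  have h2 : 0 ≤ ∑ j ∈ S, M.P S j := Finset.sum_nonneg fun j _ => M.P_nonneg S j
  linarith

lemma NRM.q_abs_sum_le (t : ℝ) (x : Fin m → ℤ) (S : Finset (Fin n)) :
    ∑ y ∈ M.States, |M.q t x S y| ≤ 2 * M.lam := by
  classical
  have hsplit :
      ∑ y ∈ M.States, |M.q t x S y|
        = ∑ y ∈ M.States.filter (· = x), |M.q t x S y|
          + ∑ y ∈ M.States.filter (¬ · = x), |M.q t x S y| :=
    (Finset.sum_filter_add_sum_filter_not _ _ _).symm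
  have h1 : ∑ y ∈ M.States.filter (· = x), |M.q t x S y| ≤ M.lam := by
    have hsub : M.States.filter (· = x) ⊆ {x} := by
      intro y hy
      simp only [Finset.mem_filter] at hy
      simp [hy.2]
    calc ∑ y ∈ M.States.filter (· = x), |M.q t x S y|
        ≤ ∑ y ∈ {x}, |M.q t x S y| :=
          Finset.sum_le_sum_of_subset_of_nonneg hsub fun _ _ _ => abs_nonneg _
      _ = |M.q t x S x| := Finset.sum_singleton _ _
      _ ≤ M.lam := by
          rw [NRM.q, if_pos rfl, abs_neg, abs_of_nonneg
            (by nlinarith [M.P0_le_one S, M.lam_pos])]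
          nlinarith [M.P0_nonneg S, M.lam_pos]
  have h2 : ∑ y ∈ M.States.filter (¬ · = x), |M.q t x S y| ≤ M.lam := by
    have habs : ∀ y ∈ M.States.filter (¬ · = x),
        |M.q t x S y| = ∑ j ∈ Finset.univ.filter (fun j : Fin n => M.col j = x - y),
          M.lam * M.P S j := by
      intro y hy
      simp only [Finset.mem_filter] at hy
      rw [NRM.q, if_neg hy.2, abs_of_nonneg]
      exact Finset.sum_nonneg fun j _ => mul_nonneg M.lam_pos.le (M.P_nonneg S j)
    rw [Finset.sum_congr rfl habs]
    have hdisj : (↑(M.States.filter (¬ · = x)) : Set (Fin m → ℤ)).PairwiseDisjoint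
        (fun y => Finset.univ.filter (fun j : Fin n => M.col j = x - y)) := by
      intro y1 _ y2 _ hne
      refine Finset.disjoint_left.2 fun j hj1 hj2 => hne ?_
      simp only [Finset.mem_filter] at hj1 hj2
      have : x - y1 = x - y2 := hj1.2 ▸ hj2.2 ▸ rfl
      exact (sub_right_inj.1 this)
    calc ∑ y ∈ M.States.filter (¬ · = x),
          ∑ j ∈ Finset.univ.filter (fun j : Fin n => M.col j = x - y), M.lam * M.P S j
        = ∑ j ∈ (M.States.filter (¬ · = x)).biUnion
            (fun y => Finset.univ.filter (fun j : Fin n => M.col j = x - y)),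
            M.lam * M.P S j := (Finset.sum_biUnion hdisj).symm
      _ ≤ ∑ j, M.lam * M.P S j :=
          Finset.sum_le_sum_of_subset_of_nonneg (Finset.subset_univ _)
            (fun j _ _ => mul_nonneg M.lam_pos.le (M.P_nonneg S j))
      _ = M.lam * (1 - M.P0 S) := by rw [← Finset.mul_sum, M.sum_P_univ]
      _ ≤ M.lam := by nlinarith [M.P0_nonneg S, M.lam_pos]
  linarith [hsplit, h1, h2]

/-! ### Log-sum-exp lemmas -/

lemma sum_exp_pos {ι : Type*} {𝒮 : Finset ι} (h : 𝒮.Nonempty) (g : ι → ℝ) :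
    0 < ∑ S ∈ 𝒮, Real.exp (g S) :=
  Finset.sum_pos (fun _ _ => Real.exp_pos _) h

lemma lse_le {ι : Type*} {𝒮 : Finset ι} (h : 𝒮.Nonempty) {a b : ι → ℝ} {d : ℝ}
    (hd : ∀ S ∈ 𝒮, a S ≤ b S + d) :
    Real.log (∑ S ∈ 𝒮, Real.exp (a S)) ≤ Real.log (∑ S ∈ 𝒮, Real.exp (b S)) + d := by
  have h1 : ∑ S ∈ 𝒮, Real.exp (a S) ≤ (∑ S ∈ 𝒮, Real.exp (b S)) * Real.exp d := by
    rw [Finset.sum_mul]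
    exact Finset.sum_le_sum fun S hS => by
      rw [← Real.exp_add]; exact Real.exp_le_exp.2 (hd S hS)
  calc Real.log (∑ S ∈ 𝒮, Real.exp (a S))
      ≤ Real.log ((∑ S ∈ 𝒮, Real.exp (b S)) * Real.exp d) :=
        Real.log_le_log (sum_exp_pos h a) h1
    _ = Real.log (∑ S ∈ 𝒮, Real.exp (b S)) + d := by
        rw [Real.log_mul (ne_of_gt (sum_exp_pos h b)) (Real.exp_ne_zero d), Real.log_exp]

lemma abs_lse_sub {ι : Type*} {𝒮 : Finset ι} (h : 𝒮.Nonempty) {a b : ι → ℝ} {d : ℝ}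
    (hd : ∀ S ∈ 𝒮, |a S - b S| ≤ d) :
    |Real.log (∑ S ∈ 𝒮, Real.exp (a S)) - Real.log (∑ S ∈ 𝒮, Real.exp (b S))| ≤ d := by
  rw [abs_sub_le_iff]
  constructor
  · have := lse_le h (a := a) (b := b) (d := d)
      (fun S hS => by have := hd S hS; rw [abs_sub_le_iff] at this; linarith [this.1])
    linarith
  · have := lse_le h (a := b) (b := a) (d := d)
      (fun S hS => by have := hd S hS; rw [abs_sub_le_iff] at this; linarith [this.2])
    linarith

lemma gibbs_le {ι : Type*} {𝒮 : Finset ι} (h𝒮 : 𝒮.Nonempty) {γ : ℝ} (hγ : 0 < γ)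
    (g w : ι → ℝ) (hw0 : ∀ S ∈ 𝒮, 0 ≤ w S) (hw1 : ∑ S ∈ 𝒮, w S = 1) :
    ∑ S ∈ 𝒮, (g S - γ * Real.log (w S)) * w S
      ≤ γ * Real.log (∑ S ∈ 𝒮, Real.exp (g S / γ)) := by
  set Z := ∑ S ∈ 𝒮, Real.exp (g S / γ) with hZ
  have hZpos : 0 < Z := sum_exp_pos h𝒮 _
  have key : ∀ S ∈ 𝒮, (g S - γ * Real.log (w S)) * w S
      ≤ γ * (Real.log Z * w S + (Real.exp (g S / γ) / Z - w S)) := by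
    intro S hS
    rcases eq_or_lt_of_le (hw0 S hS) with h0 | hpos
    · rw [← h0, mul_zero, mul_zero, sub_zero, zero_add]
      positivity
    · have hwne : w S ≠ 0 := ne_of_gt hpos
      have e1 : Real.log (Real.exp (g S / γ) / Z / w S)
          = g S / γ - Real.log Z - Real.log (w S) := by
        rw [Real.log_div (by positivity) hwne, Real.log_div (Real.exp_ne_zero _) hZpos.ne',
          Real.log_exp]
      have e2 : w S * Real.log (Real.exp (g S / γ) / Z / w S)
          ≤ Real.exp (g S / γ) / Z - w S := by
        have hq : 0 < Real.exp (g S / γ) / Z / w S := by positivity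
        have := Real.log_le_sub_one_of_pos hq
        have h3 := mul_le_mul_of_nonneg_left this hpos.le
        calc w S * Real.log (Real.exp (g S / γ) / Z / w S)
            ≤ w S * (Real.exp (g S / γ) / Z / w S - 1) := h3
          _ = Real.exp (g S / γ) / Z - w S := by field_simp
      rw [e1] at e2
      have e3 := mul_le_mul_of_nonneg_left e2 hγ.le
      have key2 : γ * (w S * (g S / γ - Real.log Z - Real.log (w S)))
          = (g S - γ * Real.log (w S)) * w S - γ * Real.log Z * w S := by
        field_simp; ring
      have key3 : γ * (Real.log Z * w S + (Real.exp (g S / γ) / Z - w S))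
          = γ * Real.log Z * w S + γ * (Real.exp (g S / γ) / Z - w S) := by ring
      rw [key2] at e3
      rw [key3]
      linarith
  calc ∑ S ∈ 𝒮, (g S - γ * Real.log (w S)) * w S
      ≤ ∑ S ∈ 𝒮, γ * (Real.log Z * w S + (Real.exp (g S / γ) / Z - w S)) :=
        Finset.sum_le_sum key
    _ = γ * Real.log Z := by
        rw [← Finset.mul_sum]
        congr 1
        rw [Finset.sum_add_distrib, Finset.sum_sub_distrib, ← Finset.mul_sum, hw1,
          ← Finset.sum_div, ← hZ, div_self hZpos.ne']
        ring

lemma gibbs_eq {ι : Type*} {𝒮 : Finset ι} (h𝒮 : 𝒮.Nonempty) {γ : ℝ} (hγ : 0 < γ)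
    (g : ι → ℝ) :
    ∑ S ∈ 𝒮, (g S - γ * Real.log (Real.exp (g S / γ) / (∑ S' ∈ 𝒮, Real.exp (g S' / γ))))
        * (Real.exp (g S / γ) / (∑ S' ∈ 𝒮, Real.exp (g S' / γ)))
      = γ * Real.log (∑ S' ∈ 𝒮, Real.exp (g S' / γ)) := by
  set Z := ∑ S' ∈ 𝒮, Real.exp (g S' / γ) with hZ
  have hZpos : 0 < Z := sum_exp_pos h𝒮 _
  have key : ∀ S ∈ 𝒮, (g S - γ * Real.log (Real.exp (g S / γ) / Z)) * (Real.exp (g S / γ) / Z)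
      = γ * Real.log Z * (Real.exp (g S / γ) / Z) := by
    intro S _
    have e1 : Real.log (Real.exp (g S / γ) / Z) = g S / γ - Real.log Z := by
      rw [Real.log_div (Real.exp_ne_zero _) hZpos.ne', Real.log_exp]
    rw [e1]
    have hγne : γ ≠ 0 := ne_of_gt hγ
    field_simp
    ring
  rw [Finset.sum_congr rfl key, ← Finset.mul_sum, ← Finset.sum_div, ← hZ, div_self hZpos.ne',
    mul_one]

/-! ### Policies and the supremum over policies -/

/-- The policy that always offers the empty assortment. -/
def deltaEmptyPol : Policy M where
  π := fun _ _ S => if S = (∅ : Finset (Fin n)) then 1 else 0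
  measurable_t := fun _ _ => measurable_const
  nonneg := by intro t x S; split_ifs <;> norm_num
  sum_one := by
    intro t x
    rw [Finset.sum_ite_eq' Finset.univ (∅ : Finset (Fin n)) (fun _ => 1)]
    simp
  supported := by
    intro t x S hS
    have h : S ≠ ∅ := fun h => hS (h ▸ M.empty_mem_feas x)
    simp [h]
  continuous_t := fun _ _ => continuous_const

instance : Nonempty (Policy M) := ⟨deltaEmptyPol M⟩

lemma policy_sum_feas (pol : Policy M) (t : ℝ) (x : Fin m → ℤ) :
    ∑ S ∈ M.feas x, pol.π t x S = 1 := by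
  rw [Finset.sum_subset (Finset.subset_univ _) fun S _ hS => pol.supported t x S hS]
  exact pol.sum_one t x

lemma iSup_policy_eq (hγ : 0 < M.gamma) (t : ℝ) (x : Fin m → ℤ)
    (g : Finset (Fin n) → ℝ) :
    (⨆ pol : Policy M, ∑ S ∈ M.feas x,
        (g S - M.gamma * Real.log (pol.π t x S)) * pol.π t x S)
      = M.gamma * Real.log (∑ S ∈ M.feas x, Real.exp (g S / M.gamma)) := by
  classical
  have hne : (M.feas x).Nonempty := ⟨∅, M.empty_mem_feas x⟩
  set Z := ∑ S ∈ M.feas x, Real.exp (g S / M.gamma) with hZ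
  have hZpos : 0 < Z := sum_exp_pos hne _
  have hub : ∀ pol : Policy M,
      (∑ S ∈ M.feas x, (g S - M.gamma * Real.log (pol.π t x S)) * pol.π t x S)
        ≤ M.gamma * Real.log Z := fun pol =>
    gibbs_le hne hγ g _ (fun S _ => pol.nonneg t x S) (policy_sum_feas M pol t x)
  refine le_antisymm (ciSup_le hub) ?_
  let pol : Policy M :=
    { π := fun _ x' S => if x' = x then
          (if S ∈ M.feas x then Real.exp (g S / M.gamma) / Z else 0)
        else (if S = ∅ then 1 else 0)
      measurable_t := fun _ _ => measurable_const
      nonneg := by intro t' x' S; split_ifs <;> positivity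
      sum_one := by
        intro t' x'
        by_cases hx : x' = x
        · rw [hx]
          simp only [eq_self_iff_true, if_true]
          rw [Finset.sum_ite_mem, Finset.univ_inter, ← Finset.sum_div, ← hZ,
            div_self hZpos.ne']
        · simp only [if_neg hx]
          rw [Finset.sum_ite_eq' Finset.univ (∅ : Finset (Fin n)) (fun _ => 1)]
          simp
      supported := by
        intro t' x' S hS
        by_cases hx : x' = x
        · subst hx; simp [hS]
        · have h : S ≠ ∅ := fun h => hS (h ▸ M.empty_mem_feas x')
          simp [hx, h]
      continuous_t := fun _ _ => continuous_const }
  have hval : (∑ S ∈ M.feas x, (g S - M.gamma * Real.log (pol.π t x S)) * pol.π t x S)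
      = M.gamma * Real.log Z := by
    have hcongr : ∀ S ∈ M.feas x,
        (g S - M.gamma * Real.log (pol.π t x S)) * pol.π t x S
          = (g S - M.gamma * Real.log (Real.exp (g S / M.gamma) / Z))
              * (Real.exp (g S / M.gamma) / Z) := by
      intro S hS
      have : pol.π t x S = Real.exp (g S / M.gamma) / Z := by
        show (if x = x then _ else _) = _
        rw [if_pos rfl, if_pos hS]
      rw [this]
    rw [Finset.sum_congr rfl hcongr, hZ]
    exact gibbs_eq hne hγ g
  have hbdd : BddAbove (Set.range fun pol : Policy M =>
      ∑ S ∈ M.feas x, (g S - M.gamma * Real.log (pol.π t x S)) * pol.π t x S) := by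
    refine ⟨M.gamma * Real.log Z, ?_⟩
    rintro y ⟨p, rfl⟩
    exact hub p
  calc M.gamma * Real.log Z
      = ∑ S ∈ M.feas x, (g S - M.gamma * Real.log (pol.π t x S)) * pol.π t x S := hval.symm
    _ ≤ _ := le_ciSup hbdd pol

/-! ### The integrand of `ℒ̄` as a log-sum-exp -/

/-- Generic bound on `γ·LSE`. -/
lemma abs_gamma_lse_le {ι : Type*} {𝒮 : Finset ι} (h𝒮 : 𝒮.Nonempty) {γ : ℝ} (hγ : 0 < γ)
    (a : ι → ℝ) {K : ℝ} (hK : ∀ S ∈ 𝒮, |a S| ≤ K) :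
    |γ * Real.log (∑ S ∈ 𝒮, Real.exp (a S / γ))| ≤ γ * |Real.log (𝒮.card)| + K := by
  have h := abs_lse_sub h𝒮 (a := fun S => a S / γ) (b := fun _ => 0) (d := K / γ)
    (fun S hS => by
      rw [sub_zero, abs_div, abs_of_pos hγ]
      gcongr
      exact hK S hS)
  have hcard : ∑ _S ∈ 𝒮, Real.exp (0 : ℝ) = (𝒮.card : ℝ) := by
    simp [Real.exp_zero]
  rw [hcard] at h
  have habs : |Real.log (∑ S ∈ 𝒮, Real.exp (a S / γ))|
      ≤ |Real.log (𝒮.card : ℝ)| + K / γ := by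
    calc |Real.log (∑ S ∈ 𝒮, Real.exp (a S / γ))|
        ≤ |Real.log (∑ S ∈ 𝒮, Real.exp (a S / γ)) - Real.log (𝒮.card : ℝ)|
          + |Real.log (𝒮.card : ℝ)| := by
            have := abs_sub_abs_le_abs_sub (Real.log (∑ S ∈ 𝒮, Real.exp (a S / γ)))
              (Real.log (𝒮.card : ℝ))
            have h2 := abs_add_le (Real.log (∑ S ∈ 𝒮, Real.exp (a S / γ))
              - Real.log (𝒮.card : ℝ)) (Real.log (𝒮.card : ℝ))
            simpa using h2
      _ ≤ |Real.log (𝒮.card : ℝ)| + K / γ := by linarith [h]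
  rw [abs_mul, abs_of_pos hγ]
  calc γ * |Real.log (∑ S ∈ 𝒮, Real.exp (a S / γ))|
      ≤ γ * (|Real.log (𝒮.card : ℝ)| + K / γ) :=
        mul_le_mul_of_nonneg_left habs hγ.le
    _ = γ * |Real.log (𝒮.card : ℝ)| + K := by field_simp

/-- The inner linear functional `c_S(s) = ∑_y e^{-βs} ψ(s,y) q(y|s,x,S)`. -/
noncomputable def NRM.cS (ψ : ℝ → (Fin m → ℤ) → ℝ) (x : Fin m → ℤ)
    (S : Finset (Fin n)) (s : ℝ) : ℝ :=
  ∑ y ∈ M.States, Real.exp (-((2 * M.lam + 1) * s)) * ψ s y * M.q s x S y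

/-- The (optimized) integrand of `ℒ̄`. -/
noncomputable def NRM.Gfun (ψ : ℝ → (Fin m → ℤ) → ℝ) (x : Fin m → ℤ) (s : ℝ) : ℝ :=
  M.gamma * Real.log (∑ S ∈ M.feas x, Real.exp ((M.r S + M.cS ψ x S s) / M.gamma))

lemma NRM.Lbar_eq (hγ : 0 < M.gamma) (ψ : ℝ → (Fin m → ℤ) → ℝ) (t : ℝ) (x : Fin m → ℤ) :
    M.Lbar ψ t x
      = Real.exp ((2 * M.lam + 1) * t) * ∫ s in t..M.T, M.Gfun ψ x s := by
  unfold NRM.Lbar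
  congr 1
  apply intervalIntegral.integral_congr
  intro s _
  dsimp only
  have hpol : ∀ pol : Policy M,
      ((∑ S ∈ M.feas x, M.r S * pol.π s x S) + M.gamma * M.ent pol s x
          + ∑ S ∈ M.feas x,
              (∑ y ∈ M.States, Real.exp (-((2 * M.lam + 1) * s)) * ψ s y * M.q s x S y)
                * pol.π s x S)
        = ∑ S ∈ M.feas x,
            ((M.r S + M.cS ψ x S s) - M.gamma * Real.log (pol.π s x S)) * pol.π s x S := by
    intro pol
    have hterm : ∀ S ∈ M.feas x,
        ((M.r S + M.cS ψ x S s) - M.gamma * Real.log (pol.π s x S)) * pol.π s x S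
          = M.r S * pol.π s x S + M.cS ψ x S s * pol.π s x S
              - M.gamma * (pol.π s x S * Real.log (pol.π s x S)) := fun S _ => by ring
    rw [Finset.sum_congr rfl hterm, Finset.sum_sub_distrib, Finset.sum_add_distrib,
      ← Finset.mul_sum, NRM.ent]
    unfold NRM.cS
    ring
  rw [NRM.Gfun]
  exact (iSup_congr hpol).trans (iSup_policy_eq M hγ s x _)

lemma NRM.Gfun_measurable (ψ : ℝ → (Fin m → ℤ) → ℝ)
    (hψ : ∀ x, Measurable fun t => ψ t x) (x : Fin m → ℤ) :
    Measurable (M.Gfun ψ x) := by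
  unfold NRM.Gfun NRM.cS
  apply Measurable.mul measurable_const
  apply Real.measurable_log.comp
  apply Finset.measurable_sum
  intro S _
  apply Real.measurable_exp.comp
  apply Measurable.div_const
  apply Measurable.add measurable_const
  apply Finset.measurable_sum
  intro y _
  exact (((Real.measurable_exp.comp (measurable_const.mul measurable_id).neg)).mul
    (hψ y)).mul measurable_const

lemma NRM.rS_abs_le (S : Finset (Fin n)) : |M.r S| ≤ M.lam * ∑ j, |M.p j| := by
  unfold NRM.r
  rw [abs_mul, abs_of_pos M.lam_pos]
  apply mul_le_mul_of_nonneg_left _ M.lam_pos.le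
  calc |∑ j, M.p j * M.P S j| ≤ ∑ j, |M.p j * M.P S j| := Finset.abs_sum_le_sum_abs _ _
    _ ≤ ∑ j, |M.p j| := by
        apply Finset.sum_le_sum
        intro j _
        rw [abs_mul, abs_of_nonneg (M.P_nonneg S j)]
        have hP1 : M.P S j ≤ 1 := by
          have h := Finset.single_le_sum (f := M.P S)
            (fun i _ => M.P_nonneg S i) (Finset.mem_univ j)
          have := M.sum_P_univ S
          have := M.P0_nonneg S
          linarith
        nlinarith [abs_nonneg (M.p j)]

lemma NRM.zero_mem_states : (0 : Fin m → ℤ) ∈ M.States := by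
  refine Fintype.mem_piFinset.2 fun i => ?_
  exact Finset.mem_Icc.2 ⟨le_refl 0, Int.ofNat_nonneg _⟩

lemma NRM.cS_abs_le' (ψ : ℝ → (Fin m → ℤ) → ℝ) {C : ℝ} (x : Fin m → ℤ)
    (S : Finset (Fin n)) (s : ℝ)
    (hC : ∀ y ∈ M.States, |ψ s y| ≤ C) :
    |M.cS ψ x S s| ≤ 2 * M.lam * C * Real.exp (-((2 * M.lam + 1) * s)) := by
  have hC0 : 0 ≤ C := le_trans (abs_nonneg _) (hC _ M.zero_mem_states)
  unfold NRM.cS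
  calc |∑ y ∈ M.States, Real.exp (-((2 * M.lam + 1) * s)) * ψ s y * M.q s x S y|
      ≤ ∑ y ∈ M.States, |Real.exp (-((2 * M.lam + 1) * s)) * ψ s y * M.q s x S y| :=
        Finset.abs_sum_le_sum_abs _ _
    _ ≤ ∑ y ∈ M.States, Real.exp (-((2 * M.lam + 1) * s)) * C * |M.q s x S y| := by
        apply Finset.sum_le_sum
        intro y hy
        rw [abs_mul, abs_mul, Real.abs_exp]
        have h1 : Real.exp (-((2 * M.lam + 1) * s)) * |ψ s y|
            ≤ Real.exp (-((2 * M.lam + 1) * s)) * C :=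
          mul_le_mul_of_nonneg_left (hC y hy) (Real.exp_pos _).le
        exact mul_le_mul_of_nonneg_right h1 (abs_nonneg _)
    _ = Real.exp (-((2 * M.lam + 1) * s)) * C * ∑ y ∈ M.States, |M.q s x S y| := by
        rw [← Finset.mul_sum]
    _ ≤ Real.exp (-((2 * M.lam + 1) * s)) * C * (2 * M.lam) :=
        mul_le_mul_of_nonneg_left (M.q_abs_sum_le s x S)
          (mul_nonneg (Real.exp_pos _).le hC0)
    _ = 2 * M.lam * C * Real.exp (-((2 * M.lam + 1) * s)) := by ring

lemma NRM.cS_abs_le (ψ : ℝ → (Fin m → ℤ) → ℝ) {C : ℝ} (x : Fin m → ℤ)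
    (S : Finset (Fin n)) {s : ℝ} (hs : 0 ≤ s)
    (hC : ∀ y ∈ M.States, |ψ s y| ≤ C) :
    |M.cS ψ x S s| ≤ 2 * M.lam * C := by
  have hC0 : 0 ≤ C := le_trans (abs_nonneg _) (hC _ M.zero_mem_states)
  have he : Real.exp (-((2 * M.lam + 1) * s)) ≤ 1 := by
    rw [Real.exp_le_one_iff]
    have : 0 ≤ (2 * M.lam + 1) * s := mul_nonneg (by nlinarith [M.lam_pos]) hs
    linarith
  calc |M.cS ψ x S s| ≤ 2 * M.lam * C * Real.exp (-((2 * M.lam + 1) * s)) :=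
      M.cS_abs_le' ψ x S s hC
    _ ≤ 2 * M.lam * C * 1 := by
        apply mul_le_mul_of_nonneg_left he
        exact mul_nonneg (by nlinarith [M.lam_pos]) hC0
    _ = 2 * M.lam * C := mul_one _

lemma NRM.cS_sub (ψ₁ ψ₂ : ℝ → (Fin m → ℤ) → ℝ) (x : Fin m → ℤ) (S : Finset (Fin n))
    (s : ℝ) :
    M.cS ψ₁ x S s - M.cS ψ₂ x S s = M.cS (fun t y => ψ₁ t y - ψ₂ t y) x S s := by
  unfold NRM.cS
  rw [← Finset.sum_sub_distrib]
  exact Finset.sum_congr rfl fun y _ => by ring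

lemma NRM.Gfun_diff_le (hγ : 0 < M.gamma) (ψ₁ ψ₂ : ℝ → (Fin m → ℤ) → ℝ) {C : ℝ}
    (x : Fin m → ℤ) (s : ℝ)
    (hC : ∀ y ∈ M.States, |ψ₁ s y - ψ₂ s y| ≤ C) :
    |M.Gfun ψ₁ x s - M.Gfun ψ₂ x s|
      ≤ 2 * M.lam * C * Real.exp (-((2 * M.lam + 1) * s)) := by
  have hne : (M.feas x).Nonempty := ⟨∅, M.empty_mem_feas x⟩
  set d := 2 * M.lam * C * Real.exp (-((2 * M.lam + 1) * s)) with hd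
  unfold NRM.Gfun
  rw [← mul_sub, abs_mul, abs_of_pos hγ]
  have h := abs_lse_sub hne (a := fun S => (M.r S + M.cS ψ₁ x S s) / M.gamma)
      (b := fun S => (M.r S + M.cS ψ₂ x S s) / M.gamma) (d := d / M.gamma)
      (fun S _ => by
        rw [div_sub_div_same, add_sub_add_left_eq_sub, abs_div, abs_of_pos hγ,
          M.cS_sub ψ₁ ψ₂ x S s]
        gcongr
        exact M.cS_abs_le' _ x S s hC)
  calc M.gamma * |Real.log (∑ S ∈ M.feas x, Real.exp ((M.r S + M.cS ψ₁ x S s) / M.gamma))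
        - Real.log (∑ S ∈ M.feas x, Real.exp ((M.r S + M.cS ψ₂ x S s) / M.gamma))|
      ≤ M.gamma * (d / M.gamma) := mul_le_mul_of_nonneg_left h hγ.le
    _ = d := by field_simp

lemma intervalIntegrable_of_bounded {f : ℝ → ℝ} (hm : Measurable f) {a b B : ℝ}
    (hB : ∀ s ∈ Set.uIoc a b, |f s| ≤ B) :
    IntervalIntegrable f MeasureTheory.volume a b := by
  rw [intervalIntegrable_iff]
  apply MeasureTheory.Measure.integrableOn_of_bounded
  · rw [Set.uIoc, Real.volume_Ioc]
    exact ENNReal.ofReal_ne_top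
  · exact hm.aestronglyMeasurable
  · exact (MeasureTheory.ae_restrict_iff' measurableSet_uIoc).2
      (MeasureTheory.ae_of_all _ fun s hs => by rw [Real.norm_eq_abs]; exact hB s hs)

lemma NRM.Gfun_abs_le (hγ : 0 < M.gamma) (ψ : ℝ → (Fin m → ℤ) → ℝ) {C₁ : ℝ}
    (hb : ∀ s ∈ Set.Icc (0:ℝ) M.T, ∀ y ∈ M.States, |ψ s y| ≤ C₁)
    (x : Fin m → ℤ) {s : ℝ} (hs : s ∈ Set.Icc (0:ℝ) M.T) :
    |M.Gfun ψ x s|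
      ≤ M.gamma * |Real.log ((M.feas x).card)|
          + (M.lam * ∑ j, |M.p j| + 2 * M.lam * C₁) := by
  have hne : (M.feas x).Nonempty := ⟨∅, M.empty_mem_feas x⟩
  exact abs_gamma_lse_le hne hγ (fun S => M.r S + M.cS ψ x S s)
    (fun S _ => by
      calc |M.r S + M.cS ψ x S s| ≤ |M.r S| + |M.cS ψ x S s| := abs_add_le _ _
        _ ≤ M.lam * ∑ j, |M.p j| + 2 * M.lam * C₁ :=
            add_le_add (M.rS_abs_le S)
              (M.cS_abs_le ψ x S hs.1 (fun y hy => hb s hs y hy)))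

lemma NRM.Gfun_intervalIntegrable (hγ : 0 < M.gamma) (ψ : ℝ → (Fin m → ℤ) → ℝ)
    (hψ : ∀ x, Measurable fun t => ψ t x) {C₁ : ℝ}
    (hb : ∀ s ∈ Set.Icc (0:ℝ) M.T, ∀ y ∈ M.States, |ψ s y| ≤ C₁)
    (x : Fin m → ℤ) {t : ℝ} (ht : t ∈ Set.Icc (0:ℝ) M.T) :
    IntervalIntegrable (M.Gfun ψ x) MeasureTheory.volume t M.T := by
  apply intervalIntegrable_of_bounded (M.Gfun_measurable ψ hψ x)
    (B := M.gamma * |Real.log ((M.feas x).card)|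
      + (M.lam * ∑ j, |M.p j| + 2 * M.lam * C₁))
  intro s hs
  rw [Set.uIoc_of_le ht.2] at hs
  exact M.Gfun_abs_le hγ ψ hb x ⟨le_trans ht.1 hs.1.le, hs.2⟩

lemma integral_exp_neg {β : ℝ} (hβ : 0 < β) (t T' : ℝ) :
    ∫ s in t..T', Real.exp (-(β * s))
      = (Real.exp (-(β * t)) - Real.exp (-(β * T'))) / β := by
  have hder : ∀ s ∈ Set.uIcc t T',
      HasDerivAt (fun u => -(Real.exp (-(β * u)) / β)) (Real.exp (-(β * s))) s := by
    intro s _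
    have h1 : HasDerivAt (fun u : ℝ => -(β * u)) (-β) s := by
      exact (by simpa using (hasDerivAt_id s).const_mul β : HasDerivAt (fun u : ℝ => β * u) β s).neg
    have h3 : HasDerivAt (fun u => -(Real.exp (-(β * u)) / β))
        (-(Real.exp (-(β * s)) * -β / β)) s := (h1.exp.div_const β).neg
    convert h3 using 1
    have hβne : β ≠ 0 := hβ.ne'
    field_simp
  have hint : IntervalIntegrable (fun s => Real.exp (-(β * s))) MeasureTheory.volume t T' :=
    Continuous.intervalIntegrable (by continuity) _ _
  rw [intervalIntegral.integral_eq_sub_of_hasDerivAt hder hint]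
  ring

end Aux

section ODE

variable {m n : ℕ} (M : NRM m n)

/-- Fundamental theorem of calculus for the primitive with moving lower limit. -/
lemma hasDerivAt_primitive_upper {F : Type*} [NormedAddCommGroup F] [NormedSpace ℝ F]
    [CompleteSpace F] {f : ℝ → F} (hf : Continuous f) (T' t : ℝ) :
    HasDerivAt (fun u => ∫ s in u..T', f s) (-(f t)) t := by
  exact intervalIntegral.integral_hasDerivAt_left (hf.intervalIntegrable t T')
    hf.stronglyMeasurable.stronglyMeasurableAtFilter hf.continuousAt

/-- The state space of the value ODE. -/
abbrev Evec (M : NRM m n) : Type _ := {x // x ∈ M.States} → ℝ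

/-- The (autonomous) vector field of the exploratory HJB equation. -/
noncomputable def Fvec (u : Evec M) : Evec M := fun x =>
  M.gamma * Real.log (∑ S ∈ M.feas x.1,
    Real.exp ((M.r S + ∑ y ∈ M.States.attach, u y * M.q 0 x.1 S y.1) / M.gamma))

lemma Fvec_apply (u : Evec M) (x : {z // z ∈ M.States}) :
    Fvec M u x = M.gamma * Real.log (∑ S ∈ M.feas x.1,
      Real.exp ((M.r S + ∑ y ∈ M.States.attach, u y * M.q 0 x.1 S y.1) / M.gamma)) := rfl

lemma Fvec_lipschitz (hγ : 0 < M.gamma) (u v : Evec M) :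
    ‖Fvec M u - Fvec M v‖ ≤ 2 * M.lam * ‖u - v‖ := by
  have h2l : (0:ℝ) ≤ 2 * M.lam := by nlinarith [M.lam_pos]
  have hnn : (0:ℝ) ≤ 2 * M.lam * ‖u - v‖ := mul_nonneg h2l (norm_nonneg _)
  rw [pi_norm_le_iff_of_nonneg hnn]
  intro x
  have hne : (M.feas x.1).Nonempty := ⟨∅, M.empty_mem_feas x.1⟩
  rw [Pi.sub_apply]
  show |Fvec M u x - Fvec M v x| ≤ 2 * M.lam * ‖u - v‖
  unfold Fvec
  rw [← mul_sub, abs_mul, abs_of_pos hγ]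
  have hptwise : ∀ S ∈ M.feas x.1,
      |(M.r S + ∑ y ∈ M.States.attach, u y * M.q 0 x.1 S y.1) / M.gamma
        - (M.r S + ∑ y ∈ M.States.attach, v y * M.q 0 x.1 S y.1) / M.gamma|
        ≤ 2 * M.lam * ‖u - v‖ / M.gamma := by
    intro S _
    rw [div_sub_div_same, add_sub_add_left_eq_sub, abs_div, abs_of_pos hγ]
    gcongr
    rw [← Finset.sum_sub_distrib]
    calc |∑ y ∈ M.States.attach, (u y * M.q 0 x.1 S y.1 - v y * M.q 0 x.1 S y.1)|
        ≤ ∑ y ∈ M.States.attach, |u y * M.q 0 x.1 S y.1 - v y * M.q 0 x.1 S y.1| :=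
          Finset.abs_sum_le_sum_abs _ _
      _ ≤ ∑ y ∈ M.States.attach, ‖u - v‖ * |M.q 0 x.1 S y.1| := by
          apply Finset.sum_le_sum
          intro y _
          rw [← sub_mul, abs_mul]
          apply mul_le_mul_of_nonneg_right _ (abs_nonneg _)
          have := norm_le_pi_norm (u - v) y
          simpa [Real.norm_eq_abs] using this
      _ = ‖u - v‖ * ∑ y ∈ M.States.attach, |M.q 0 x.1 S y.1| := by rw [← Finset.mul_sum]
      _ = ‖u - v‖ * ∑ y ∈ M.States, |M.q 0 x.1 S y| := by
          rw [Finset.sum_attach M.States (fun y => |M.q 0 x.1 S y|)]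
      _ ≤ ‖u - v‖ * (2 * M.lam) :=
          mul_le_mul_of_nonneg_left (M.q_abs_sum_le 0 x.1 S) (norm_nonneg _)
      _ = 2 * M.lam * ‖u - v‖ := by ring
  have h := abs_lse_sub hne
    (a := fun S => (M.r S + ∑ y ∈ M.States.attach, u y * M.q 0 x.1 S y.1) / M.gamma)
    (b := fun S => (M.r S + ∑ y ∈ M.States.attach, v y * M.q 0 x.1 S y.1) / M.gamma)
    (d := 2 * M.lam * ‖u - v‖ / M.gamma) hptwise
  calc M.gamma * |Real.log (∑ S ∈ M.feas x.1, Real.exp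
          ((M.r S + ∑ y ∈ M.States.attach, u y * M.q 0 x.1 S y.1) / M.gamma))
        - Real.log (∑ S ∈ M.feas x.1, Real.exp
          ((M.r S + ∑ y ∈ M.States.attach, v y * M.q 0 x.1 S y.1) / M.gamma))|
      ≤ M.gamma * (2 * M.lam * ‖u - v‖ / M.gamma) := mul_le_mul_of_nonneg_left h hγ.le
    _ = 2 * M.lam * ‖u - v‖ := by field_simp

lemma Fvec_continuous (hγ : 0 < M.gamma) : Continuous (Fvec M) := by
  have h2l : (0:ℝ) ≤ 2 * M.lam := by nlinarith [M.lam_pos]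
  refine LipschitzWith.continuous (K := Real.toNNReal (2 * M.lam)) ?_
  apply LipschitzWith.of_dist_le_mul
  intro u v
  rw [dist_eq_norm, dist_eq_norm, Real.coe_toNNReal _ h2l]
  exact Fvec_lipschitz M hγ u v

/-- Uniform bound on `Fvec 0`. -/
noncomputable def Cz (M : NRM m n) : ℝ :=
  M.gamma * Real.log ((2:ℝ) ^ n) + M.lam * ∑ j, |M.p j|

lemma Cz_nonneg : 0 ≤ Cz M := by
  have h1 : (1:ℝ) ≤ (2:ℝ) ^ n := one_le_pow₀ (by norm_num)
  have h2 : 0 ≤ Real.log ((2:ℝ) ^ n) := Real.log_nonneg h1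
  have h3 : 0 ≤ M.lam * ∑ j, |M.p j| :=
    mul_nonneg M.lam_pos.le (Finset.sum_nonneg fun j _ => abs_nonneg _)
  exact add_nonneg (mul_nonneg M.gamma_nonneg h2) h3

lemma Fvec_zero_bound (hγ : 0 < M.gamma) : ‖Fvec M 0‖ ≤ Cz M := by
  rw [pi_norm_le_iff_of_nonneg (Cz_nonneg M)]
  intro x
  have hne : (M.feas x.1).Nonempty := ⟨∅, M.empty_mem_feas x.1⟩
  show |Fvec M 0 x| ≤ Cz M
  unfold Fvec
  have hz : ∀ S : Finset (Fin n),
      M.r S + ∑ y ∈ M.States.attach, (0 : Evec M) y * M.q 0 x.1 S y.1 = M.r S := by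
    intro S; simp
  have h := abs_gamma_lse_le hne hγ
    (a := fun S => M.r S + ∑ y ∈ M.States.attach, (0 : Evec M) y * M.q 0 x.1 S y.1)
    (K := M.lam * ∑ j, |M.p j|)
    (fun S _ => by rw [hz S]; exact M.rS_abs_le S)
  have hcard : M.gamma * |Real.log ((M.feas x.1).card : ℝ)|
      ≤ M.gamma * Real.log ((2:ℝ) ^ n) := by
    apply mul_le_mul_of_nonneg_left _ M.gamma_nonneg
    have hpos : (0:ℝ) < ((M.feas x.1).card : ℝ) := by
      exact_mod_cast Finset.card_pos.2 hne
    rw [abs_of_nonneg (Real.log_nonneg (by exact_mod_cast Finset.card_pos.2 hne))]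
    apply Real.log_le_log hpos
    have hle : (M.feas x.1).card ≤ 2 ^ n := by
      calc (M.feas x.1).card ≤ Fintype.card (Finset (Fin n)) := Finset.card_le_univ _
        _ = 2 ^ n := by rw [Fintype.card_finset, Fintype.card_fin]
    exact_mod_cast hle
  calc |M.gamma * Real.log (∑ S ∈ M.feas x.1, Real.exp
          ((M.r S + ∑ y ∈ M.States.attach, (0 : Evec M) y * M.q 0 x.1 S y.1) / M.gamma))|
      ≤ M.gamma * |Real.log ((M.feas x.1).card : ℝ)| + M.lam * ∑ j, |M.p j| := h
    _ ≤ Cz M := by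
        unfold Cz
        linarith [hcard]

/-- The Picard iterates for the exploratory HJB ODE. -/
noncomputable def useq : ℕ → ℝ → Evec M
  | 0 => fun _ => 0
  | (k+1) => fun t => ∫ s in t..M.T, Fvec M (useq k s)

lemma useq_continuous (hγ : 0 < M.gamma) : ∀ k, Continuous (useq M k) := by
  intro k
  induction k with
  | zero => exact continuous_const
  | succ k ih =>
    have hf : Continuous fun s => Fvec M (useq M k s) := (Fvec_continuous M hγ).comp ih
    show Continuous fun t => ∫ s in t..M.T, Fvec M (useq M k s)
    exact continuous_iff_continuousAt.2 fun t =>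
      (hasDerivAt_primitive_upper hf M.T t).continuousAt

lemma integral_T_sub_pow (k : ℕ) (t T' : ℝ) :
    ∫ s in t..T', (T' - s)^k = (T' - t)^(k+1) / ((k:ℝ)+1) := by
  have hder : ∀ s ∈ Set.uIcc t T',
      HasDerivAt (fun u => -((T' - u)^(k+1) / ((k:ℝ)+1))) ((T' - s)^k) s := by
    intro s _
    have h1 : HasDerivAt (fun u : ℝ => T' - u) (-1) s := by
      simpa using (hasDerivAt_id s).const_sub T'
    have h2 : HasDerivAt (fun u => -((T' - u)^(k+1) / ((k:ℝ)+1)))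
        (-(↑(k + 1) * (T' - s) ^ (k + 1 - 1) * -1 / ((k:ℝ) + 1))) s :=
      ((h1.pow (k+1)).div_const ((k:ℝ)+1)).neg
    convert h2 using 1
    have hk : ((k:ℝ)+1) ≠ 0 := by positivity
    push_cast
    field_simp
  have hint : IntervalIntegrable (fun s => (T' - s)^k) MeasureTheory.volume t T' :=
    Continuous.intervalIntegrable (by continuity) _ _
  rw [intervalIntegral.integral_eq_sub_of_hasDerivAt hder hint]
  ring

lemma useq_diff_bound (hγ : 0 < M.gamma) : ∀ k, ∀ t ∈ Set.Icc (0:ℝ) M.T,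
    ‖useq M (k+1) t - useq M k t‖
      ≤ Cz M * (2*M.lam)^k * (M.T - t)^(k+1) / (Nat.factorial (k+1)) := by
  intro k
  induction k with
  | zero =>
    intro t ht
    have h0 : useq M 1 t - useq M 0 t = ∫ s in t..M.T, Fvec M 0 := by
      show (∫ s in t..M.T, Fvec M (useq M 0 s)) - 0 = _
      rw [sub_zero]
      simp only [useq]
    rw [h0, intervalIntegral.integral_const]
    rw [norm_smul, Real.norm_eq_abs, abs_of_nonneg (by linarith [ht.2])]
    have := Fvec_zero_bound M hγ
    have hTt : 0 ≤ M.T - t := by linarith [ht.2]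
    calc (M.T - t) * ‖Fvec M 0‖ ≤ (M.T - t) * Cz M :=
        mul_le_mul_of_nonneg_left this hTt
      _ = Cz M * (2*M.lam)^0 * (M.T - t)^(0+1) / (Nat.factorial (0+1)) := by
          simp [Nat.factorial]
          ring
  | succ k ih =>
    intro t ht
    have hcont1 : Continuous fun s => Fvec M (useq M (k+1) s) :=
      (Fvec_continuous M hγ).comp (useq_continuous M hγ (k+1))
    have hcont0 : Continuous fun s => Fvec M (useq M k s) :=
      (Fvec_continuous M hγ).comp (useq_continuous M hγ k)
    have heq : useq M (k+2) t - useq M (k+1) t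
        = ∫ s in t..M.T, (Fvec M (useq M (k+1) s) - Fvec M (useq M k s)) := by
      show (∫ s in t..M.T, Fvec M (useq M (k+1) s))
          - (∫ s in t..M.T, Fvec M (useq M k s)) = _
      rw [← intervalIntegral.integral_sub (hcont1.intervalIntegrable _ _)
        (hcont0.intervalIntegrable _ _)]
    rw [heq]
    have hae : ∀ᵐ s ∂(MeasureTheory.volume.restrict (Set.uIoc t M.T)),
        ‖Fvec M (useq M (k+1) s) - Fvec M (useq M k s)‖
          ≤ (2*M.lam) * (Cz M * (2*M.lam)^k / (Nat.factorial (k+1))) * (M.T - s)^(k+1) := by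
      refine (MeasureTheory.ae_restrict_iff' measurableSet_uIoc).2
        (MeasureTheory.ae_of_all _ fun s hs => ?_)
      rw [Set.uIoc_of_le ht.2] at hs
      have hsIcc : s ∈ Set.Icc (0:ℝ) M.T := ⟨le_trans ht.1 hs.1.le, hs.2⟩
      calc ‖Fvec M (useq M (k+1) s) - Fvec M (useq M k s)‖
          ≤ 2 * M.lam * ‖useq M (k+1) s - useq M k s‖ := Fvec_lipschitz M hγ _ _
        _ ≤ 2 * M.lam * (Cz M * (2*M.lam)^k * (M.T - s)^(k+1) / (Nat.factorial (k+1))) := by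
            apply mul_le_mul_of_nonneg_left (ih s hsIcc) (by nlinarith [M.lam_pos])
        _ = (2*M.lam) * (Cz M * (2*M.lam)^k / (Nat.factorial (k+1))) * (M.T - s)^(k+1) := by
            ring
    have hbint : IntervalIntegrable
        (fun s => (2*M.lam) * (Cz M * (2*M.lam)^k / (Nat.factorial (k+1))) * (M.T - s)^(k+1))
        MeasureTheory.volume t M.T :=
      Continuous.intervalIntegrable (by continuity) _ _
    have key := intervalIntegral.norm_integral_le_abs_of_norm_le hae hbint
    have hval : ∫ s in t..M.T,
        (2*M.lam) * (Cz M * (2*M.lam)^k / (Nat.factorial (k+1))) * (M.T - s)^(k+1)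
        = (2*M.lam) * (Cz M * (2*M.lam)^k / (Nat.factorial (k+1)))
            * ((M.T - t)^(k+2) / ((k:ℝ)+2)) := by
      rw [intervalIntegral.integral_const_mul, integral_T_sub_pow]
      push_cast
      ring
    rw [hval] at key
    have hfacpos : (0:ℝ) < (Nat.factorial (k+1) : ℝ) := by
      exact_mod_cast Nat.factorial_pos (k+1)
    have hTt : 0 ≤ M.T - t := by linarith [ht.2]
    have hnn : 0 ≤ (2*M.lam) * (Cz M * (2*M.lam)^k / (Nat.factorial (k+1)))
        * ((M.T - t)^(k+2) / ((k:ℝ)+2)) := by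
      have h2l : (0:ℝ) ≤ 2 * M.lam := by nlinarith [M.lam_pos]
      have := Cz_nonneg M
      positivity
    rw [abs_of_nonneg hnn] at key
    refine le_trans key (le_of_eq ?_)
    have hfs : (Nat.factorial (k+1+1) : ℝ) = ((k:ℝ)+2) * (Nat.factorial (k+1) : ℝ) := by
      rw [Nat.factorial_succ]
      push_cast
      ring
    rw [hfs]
    have hk2 : ((k:ℝ)+2) ≠ 0 := by positivity
    field_simp
    ring

set_option maxHeartbeats 1000000 in
lemma exists_hjb_solution (hγ : 0 < M.gamma) :
    ∃ v : ℝ → (Fin m → ℤ) → ℝ, M.C10 v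
      ∧ (∀ t ∈ Set.Ico (0:ℝ) M.T, ∀ x ∈ M.States,
          M.dvt v t x
            + (⨆ pol : Policy M, ∑ S ∈ M.feas x,
                (M.H t x S v - M.gamma * Real.log (pol.π t x S)) * pol.π t x S)
            = 0)
      ∧ ∀ x ∈ M.States, v M.T x = 0 := by
  classical
  have hCz := Cz_nonneg M
  have hlam := M.lam_pos
  have hT := M.T_pos
  haveI : CompactSpace ↥(Set.Icc (0:ℝ) M.T) := isCompact_iff_compactSpace.mp isCompact_Icc
  let Us : ℕ → C(↥(Set.Icc (0:ℝ) M.T), Evec M) := fun k =>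
    ⟨fun p => useq M k p.1, (useq_continuous M hγ k).comp continuous_subtype_val⟩
  have hMk : ∀ k, dist (Us k) (Us (k+1))
      ≤ Cz M * (2*M.lam)^k * M.T^(k+1) / (Nat.factorial (k+1)) := by
    intro k
    have h0 : (0:ℝ) ≤ Cz M * (2*M.lam)^k * M.T^(k+1) / (Nat.factorial (k+1)) := by
      positivity
    rw [ContinuousMap.dist_le h0]
    intro p
    rw [dist_comm, dist_eq_norm]
    calc dist (Us (k+1) p) (Us k p) = ‖useq M (k+1) p.1 - useq M k p.1‖ := by
          rw [dist_eq_norm]; rfl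
      _ ≤ Cz M * (2*M.lam)^k * (M.T - p.1)^(k+1) / (Nat.factorial (k+1)) :=
          useq_diff_bound M hγ k p.1 p.2
      _ ≤ Cz M * (2*M.lam)^k * M.T^(k+1) / (Nat.factorial (k+1)) := by
          gcongr
          · linarith [p.2.2]
          · linarith [p.2.1]
  have hsum : Summable (fun k => Cz M * (2*M.lam)^k * M.T^(k+1) / (Nat.factorial (k+1))) := by
    refine Summable.of_nonneg_of_le
      (fun k => div_nonneg (mul_nonneg (mul_nonneg hCz (by positivity))
        (pow_nonneg hT.le _)) (Nat.cast_nonneg _)) (fun k => ?_)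
      (((Real.summable_pow_div_factorial (2*M.lam*M.T)).mul_left (Cz M * M.T)))
    have e : Cz M * (2*M.lam)^k * M.T^(k+1) / (Nat.factorial (k+1))
        = (Cz M * M.T) * ((2*M.lam*M.T)^k / (Nat.factorial (k+1))) := by
      rw [mul_pow, pow_succ]
      ring
    rw [e]
    apply mul_le_mul_of_nonneg_left _ (mul_nonneg hCz hT.le)
    exact div_le_div_of_nonneg_left
      (pow_nonneg (mul_nonneg (by nlinarith [hlam] : (0:ℝ) ≤ 2*M.lam) hT.le) k)
      (by exact_mod_cast Nat.factorial_pos k)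
      (by exact_mod_cast Nat.factorial_le (Nat.le_succ k))
  have hcauchy := cauchySeq_of_dist_le_of_summable _ hMk hsum
  obtain ⟨U, hU⟩ := cauchySeq_tendsto_of_complete hcauchy
  let u : ℝ → Evec M := fun t => U (Set.projIcc 0 M.T M.T_pos.le t)
  have hucont : Continuous u := U.continuous.comp continuous_projIcc
  have humem : ∀ t (ht : t ∈ Set.Icc (0:ℝ) M.T), u t = U ⟨t, ht⟩ := by
    intro t ht
    show U (Set.projIcc 0 M.T M.T_pos.le t) = U ⟨t, ht⟩
    rw [Set.projIcc_of_mem]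
  have hd0 : Filter.Tendsto (fun k => dist (Us k) U) Filter.atTop (nhds 0) :=
    tendsto_iff_dist_tendsto_zero.1 hU
  have hptle : ∀ k t (ht : t ∈ Set.Icc (0:ℝ) M.T),
      ‖useq M k t - u t‖ ≤ dist (Us k) U := by
    intro k t ht
    rw [humem t ht]
    have h := ContinuousMap.dist_apply_le_dist (f := Us k) (g := U) ⟨t, ht⟩
    rw [dist_eq_norm] at h
    exact h
  have hinteq : ∀ t (ht : t ∈ Set.Icc (0:ℝ) M.T),
      u t = ∫ s in t..M.T, Fvec M (u s) := by
    intro t ht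
    have h1 : Filter.Tendsto (fun k => useq M (k+1) t) Filter.atTop (nhds (u t)) := by
      rw [humem t ht]
      have heval : Filter.Tendsto (fun k => Us k ⟨t, ht⟩) Filter.atTop
          (nhds (U ⟨t, ht⟩)) :=
        ((continuous_eval_const
          (⟨t, ht⟩ : ↥(Set.Icc (0:ℝ) M.T))).tendsto U).comp hU
      exact heval.comp (Filter.tendsto_add_atTop_nat 1)
    have h2 : Filter.Tendsto (fun k => useq M (k+1) t) Filter.atTop
        (nhds (∫ s in t..M.T, Fvec M (u s))) := by
      rw [tendsto_iff_dist_tendsto_zero]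
      apply squeeze_zero (fun k => dist_nonneg)
        (g := fun k => 2*M.lam * dist (Us k) U * (M.T - t))
      · intro k
        have hsubint : (useq M (k+1) t) - (∫ s in t..M.T, Fvec M (u s))
            = ∫ s in t..M.T, (Fvec M (useq M k s) - Fvec M (u s)) := by
          show (∫ s in t..M.T, Fvec M (useq M k s)) - _ = _
          have hc1 : Continuous fun s => Fvec M (useq M k s) :=
            (Fvec_continuous M hγ).comp (useq_continuous M hγ k)
          have hc2 : Continuous fun s => Fvec M (u s) :=
            (Fvec_continuous M hγ).comp hucont
          rw [← intervalIntegral.integral_sub (hc1.intervalIntegrable _ _)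
            (hc2.intervalIntegrable _ _)]
        rw [dist_eq_norm, hsubint]
        have hb : ∀ s ∈ Set.uIoc t M.T,
            ‖Fvec M (useq M k s) - Fvec M (u s)‖ ≤ 2*M.lam * dist (Us k) U := by
          intro s hs
          rw [Set.uIoc_of_le ht.2] at hs
          have hsK : s ∈ Set.Icc (0:ℝ) M.T := ⟨le_trans ht.1 hs.1.le, hs.2⟩
          calc ‖Fvec M (useq M k s) - Fvec M (u s)‖
              ≤ 2 * M.lam * ‖useq M k s - u s‖ := Fvec_lipschitz M hγ _ _
            _ ≤ 2 * M.lam * dist (Us k) U :=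
                mul_le_mul_of_nonneg_left (hptle k s hsK) (by nlinarith)
        calc ‖∫ s in t..M.T, (Fvec M (useq M k s) - Fvec M (u s))‖
            ≤ 2*M.lam * dist (Us k) U * |M.T - t| :=
              intervalIntegral.norm_integral_le_of_norm_le_const hb
          _ = 2*M.lam * dist (Us k) U * (M.T - t) := by
              rw [abs_of_nonneg (by linarith [ht.2])]
      · have := (hd0.const_mul (2*M.lam)).mul_const (M.T - t)
        simpa using this
    exact tendsto_nhds_unique h1 h2
  set f : ℝ → Evec M := fun s => Fvec M (u s) with hf
  have hfcont : Continuous f := (Fvec_continuous M hγ).comp hucont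
  set vf : ℝ → Evec M := fun t => ∫ s in t..M.T, f s with hvf
  have hvder : ∀ t, HasDerivAt vf (-(f t)) t := fun t =>
    hasDerivAt_primitive_upper hfcont M.T t
  have hveq : ∀ t (ht : t ∈ Set.Icc (0:ℝ) M.T), vf t = u t := fun t ht =>
    (hinteq t ht).symm
  set v : ℝ → (Fin m → ℤ) → ℝ :=
    fun t x => if h : x ∈ M.States then vf t ⟨x, h⟩ else 0 with hv
  have hcoord : ∀ (x : Fin m → ℤ) (hx : x ∈ M.States) (t : ℝ),
      HasDerivAt (fun s => vf s ⟨x, hx⟩) (-(f t ⟨x, hx⟩)) t := by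
    intro x hx t
    have h := hasDerivAt_pi.1 (hvder t) ⟨x, hx⟩
    simpa using h
  refine ⟨v, ?_, ?_, ?_⟩
  · intro x hx
    have hfun : (fun t => v t x) = fun t => vf t ⟨x, hx⟩ := funext fun t => dif_pos hx
    rw [hfun]
    apply ContDiff.contDiffOn
    rw [contDiff_one_iff_deriv]
    refine ⟨fun t => (hcoord x hx t).differentiableAt, ?_⟩
    have hder : deriv (fun t => vf t ⟨x, hx⟩) = fun t => -(f t ⟨x, hx⟩) :=
      funext fun t => (hcoord x hx t).deriv
    rw [hder]
    exact ((continuous_apply _).comp hfcont).neg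
  · intro t ht x hx
    have htIcc : t ∈ Set.Icc (0:ℝ) M.T := ⟨ht.1, ht.2.le⟩
    have hfun : (fun s => v s x) = fun s => vf s ⟨x, hx⟩ := funext fun s => dif_pos hx
    have hder : M.dvt v t x = -(f t ⟨x, hx⟩) := by
      rw [NRM.dvt, hfun]
      exact (hcoord x hx t).hasDerivWithinAt.derivWithin
        ((uniqueDiffOn_Icc M.T_pos) t htIcc)
    have hsup := iSup_policy_eq M hγ t x (fun S => M.H t x S v)
    have hvy : ∀ y : {z // z ∈ M.States}, v t y.1 = u t y := by
      intro y
      show (if h : (y:Fin m → ℤ) ∈ M.States then vf t ⟨y.1, h⟩ else 0) = u t y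
      rw [dif_pos y.2, hveq t htIcc]
    have hHsum : ∀ S : Finset (Fin n),
        M.H t x S v = M.r S + ∑ y ∈ M.States.attach, u t y * M.q 0 x S y.1 := by
      intro S
      rw [NRM.H, ← Finset.sum_attach M.States (fun y => v t y * M.q t x S y)]
      congr 1
      refine Finset.sum_congr rfl fun y _ => ?_
      rw [hvy y]
      rfl
    have hFv : f t ⟨x, hx⟩
        = M.gamma * Real.log (∑ S ∈ M.feas x, Real.exp ((M.H t x S v) / M.gamma)) := by
      show Fvec M (u t) ⟨x, hx⟩ = _
      rw [Fvec_apply]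
      congr 1
      apply congrArg Real.log
      apply Finset.sum_congr rfl
      intro S hS
      rw [hHsum S]
    rw [hder, hsup, ← hFv]
    exact neg_add_cancel _
  · intro x hx
    show (if h : x ∈ M.States then vf M.T ⟨x, h⟩ else 0) = 0
    rw [dif_pos hx]
    show (∫ s in M.T..M.T, f s) ⟨x, hx⟩ = 0
    rw [intervalIntegral.integral_same]
    rfl

end ODE

/-- `ℒ̄` is a contraction on `B([0,T] × 𝒳)` (with constant `2λ/(2λ+1)` for the
supremum norm), and the exploratory HJB equation
`∂v/∂t (t,x) + sup_{π ∈ Π} ∑_{S ∈ 𝒜(x)} [H(t,x,S,v) - γ log π(S|t,x)] π(S|t,x) = 0`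
on `[0,T) × 𝒳` with `v(T,·) = 0` admits a solution in `C^{1,0}([0,T] × 𝒳)`. -/
theorem Lbar_contraction_and_hjb_solution {m n : ℕ} (M : NRM m n)
    (hγ : 0 < M.gamma) :
    (∀ ψ₁ ψ₂ : ℝ → (Fin m → ℤ) → ℝ,
      (∀ x, Measurable fun t => ψ₁ t x) →
      (∀ x, Measurable fun t => ψ₂ t x) →
      (∃ C₁, ∀ t ∈ Set.Icc (0:ℝ) M.T, ∀ x ∈ M.States, |ψ₁ t x| ≤ C₁) →
      (∃ C₂, ∀ t ∈ Set.Icc (0:ℝ) M.T, ∀ x ∈ M.States, |ψ₂ t x| ≤ C₂) →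
      ∀ C : ℝ, (∀ t ∈ Set.Icc (0:ℝ) M.T, ∀ x ∈ M.States, |ψ₁ t x - ψ₂ t x| ≤ C) →
        ∀ t ∈ Set.Icc (0:ℝ) M.T, ∀ x ∈ M.States,
          |M.Lbar ψ₁ t x - M.Lbar ψ₂ t x| ≤ (2 * M.lam / (2 * M.lam + 1)) * C)
    ∧ ∃ v : ℝ → (Fin m → ℤ) → ℝ, M.C10 v
        ∧ (∀ t ∈ Set.Ico (0:ℝ) M.T, ∀ x ∈ M.States,
            M.dvt v t x
              + (⨆ pol : Policy M, ∑ S ∈ M.feas x,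
                  (M.H t x S v - M.gamma * Real.log (pol.π t x S)) * pol.π t x S)
              = 0)
        ∧ ∀ x ∈ M.States, v M.T x = 0 := by
  constructor
  · intro ψ₁ ψ₂ hm₁ hm₂ hb₁ hb₂ C hC t ht x hx
    obtain ⟨C₁, hC₁⟩ := hb₁
    obtain ⟨C₂, hC₂⟩ := hb₂
    have hγ := hγ
    have hβ : (0:ℝ) < 2 * M.lam + 1 := by nlinarith [M.lam_pos]
    have hC0 : 0 ≤ C := le_trans (abs_nonneg _) (hC t ht x hx)
    have hint1 := M.Gfun_intervalIntegrable hγ ψ₁ hm₁ hC₁ x ht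
    have hint2 := M.Gfun_intervalIntegrable hγ ψ₂ hm₂ hC₂ x ht
    rw [M.Lbar_eq hγ ψ₁ t x, M.Lbar_eq hγ ψ₂ t x, ← mul_sub, abs_mul, Real.abs_exp,
      ← intervalIntegral.integral_sub hint1 hint2]
    have hb : ∀ᵐ s ∂(MeasureTheory.volume.restrict (Set.uIoc t M.T)),
        ‖M.Gfun ψ₁ x s - M.Gfun ψ₂ x s‖
          ≤ 2 * M.lam * C * Real.exp (-((2 * M.lam + 1) * s)) := by
      refine (MeasureTheory.ae_restrict_iff' measurableSet_uIoc).2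
        (MeasureTheory.ae_of_all _ fun s hs => ?_)
      rw [Set.uIoc_of_le ht.2] at hs
      rw [Real.norm_eq_abs]
      exact M.Gfun_diff_le hγ ψ₁ ψ₂ x s
        (fun y hy => hC s ⟨le_trans ht.1 hs.1.le, hs.2⟩ y hy)
    have hbnd_int : IntervalIntegrable
        (fun s => 2 * M.lam * C * Real.exp (-((2 * M.lam + 1) * s)))
        MeasureTheory.volume t M.T :=
      Continuous.intervalIntegrable (by continuity) _ _
    have key := intervalIntegral.norm_integral_le_abs_of_norm_le hb hbnd_int
    have hval : ∫ s in t..M.T, 2 * M.lam * C * Real.exp (-((2 * M.lam + 1) * s))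
        = 2 * M.lam * C * ((Real.exp (-((2 * M.lam + 1) * t))
            - Real.exp (-((2 * M.lam + 1) * M.T))) / (2 * M.lam + 1)) := by
      rw [intervalIntegral.integral_const_mul, integral_exp_neg hβ t M.T]
    rw [hval] at key
    have hE : Real.exp (-((2 * M.lam + 1) * M.T)) ≤ Real.exp (-((2 * M.lam + 1) * t)) := by
      apply Real.exp_le_exp.2
      have := mul_le_mul_of_nonneg_left ht.2 hβ.le
      linarith
    have hA : 0 ≤ Real.exp (-((2 * M.lam + 1) * t)) - Real.exp (-((2 * M.lam + 1) * M.T)) := by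
      linarith
    rw [abs_of_nonneg (mul_nonneg (mul_nonneg
      (by nlinarith [M.lam_pos] : (0:ℝ) ≤ 2 * M.lam) hC0) (div_nonneg hA hβ.le))] at key
    have hfin : Real.exp ((2 * M.lam + 1) * t)
        * (2 * M.lam * C * ((Real.exp (-((2 * M.lam + 1) * t))
            - Real.exp (-((2 * M.lam + 1) * M.T))) / (2 * M.lam + 1)))
        ≤ 2 * M.lam / (2 * M.lam + 1) * C := by
      have h1 : Real.exp ((2 * M.lam + 1) * t) * Real.exp (-((2 * M.lam + 1) * t)) = 1 := by
        rw [← Real.exp_add]; simp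
      have expand : Real.exp ((2 * M.lam + 1) * t)
          * (2 * M.lam * C * ((Real.exp (-((2 * M.lam + 1) * t))
              - Real.exp (-((2 * M.lam + 1) * M.T))) / (2 * M.lam + 1)))
          = (2 * M.lam / (2 * M.lam + 1) * C)
              * (Real.exp ((2 * M.lam + 1) * t) * Real.exp (-((2 * M.lam + 1) * t)))
            - (2 * M.lam / (2 * M.lam + 1) * C)
              * (Real.exp ((2 * M.lam + 1) * t) * Real.exp (-((2 * M.lam + 1) * M.T))) := by
        field_simp
      rw [expand, h1, mul_one]
      have hnn : 0 ≤ (2 * M.lam / (2 * M.lam + 1) * C)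
          * (Real.exp ((2 * M.lam + 1) * t) * Real.exp (-((2 * M.lam + 1) * M.T))) := by
        have h5 : 0 ≤ 2 * M.lam / (2 * M.lam + 1) * C :=
          mul_nonneg (div_nonneg (by nlinarith [M.lam_pos]) hβ.le) hC0
        exact mul_nonneg h5 (by positivity)
      linarith
    calc Real.exp ((2 * M.lam + 1) * t)
          * |∫ s in t..M.T, (M.Gfun ψ₁ x s - M.Gfun ψ₂ x s)|
        ≤ Real.exp ((2 * M.lam + 1) * t)
            * (2 * M.lam * C * ((Real.exp (-((2 * M.lam + 1) * t))
                - Real.exp (-((2 * M.lam + 1) * M.T))) / (2 * M.lam + 1))) := by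
          apply mul_le_mul_of_nonneg_left _ (Real.exp_pos _).le
          rw [← Real.norm_eq_abs]
          exact key
      _ ≤ 2 * M.lam / (2 * M.lam + 1) * C := hfin
  · exact exists_hjb_solution M hγ

end RLNRM
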